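/- Let a_1, …, a_l ≥ 2 be integers with continuants p_l, p_{l−1}, q_l, q_{l−1} and r_l = p_l − q_l, and let b_1, …, b_m ≥ 2 be integers whose continuant numerator equals p_l and whose continuant denominator equals r_l. Then the sequence (a_1, …, a_{l−1}, a_l + b_m + 1, b_{m−1}, …, b_1), obtained by concatenating a and the reversal of b and merging the junction entries into the single entry a_l + b_m + 1, has continuant numerator p_l² + p_l p_{l−1} − p_{l−1}² and continuant denominator q_l p_l + q_{l−1} p_l − q_{l−1} p_{l−1} − 1. -/
import Mathlib


/-- Continuant numerators `p_j` of `[c_1, c_2, …]⁻`: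
`p_0 = 1`, `p_1 = c_1`, `p_j = c_j p_{j-1} - p_{j-2}`. -/
def contP (c : ℕ → ℤ) : ℕ → ℤ
  | 0 => 1
  | 1 => c 1
  | (j + 2) => c (j + 2) * contP c (j + 1) - contP c j

/-- Continuant denominators `q_j` of `[c_1, c_2, …]⁻`:
`q_0 = 0`, `q_1 = 1`, `q_j = c_j q_{j-1} - q_{j-2}`. -/
def contQ (c : ℕ → ℤ) : ℕ → ℤ
  | 0 => 0
  | 1 => 1
  | (j + 2) => c (j + 2) * contQ c (j + 1) - contQ c j

lemma contP_zero (c : ℕ → ℤ) : contP c 0 = 1 := rfl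
lemma contP_one (c : ℕ → ℤ) : contP c 1 = c 1 := rfl
lemma contP_rec (c : ℕ → ℤ) (j : ℕ) :
    contP c (j + 2) = c (j + 2) * contP c (j + 1) - contP c j := rfl
lemma contQ_zero (c : ℕ → ℤ) : contQ c 0 = 0 := rfl
lemma contQ_one (c : ℕ → ℤ) : contQ c 1 = 1 := rfl
lemma contQ_rec (c : ℕ → ℤ) (j : ℕ) :
    contQ c (j + 2) = c (j + 2) * contQ c (j + 1) - contQ c j := rfl

lemma cont_congr : ∀ (n : ℕ) (c d : ℕ → ℤ), (∀ i, 1 ≤ i → i ≤ n → c i = d i) →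
    contP c n = contP d n ∧ contQ c n = contQ d n
  | 0, c, d, _ => by simp [contP_zero, contQ_zero]
  | 1, c, d, h => by simp [contP_one, contQ_one, h 1 le_rfl le_rfl]
  | (n+2), c, d, h => by
    obtain ⟨h1, h2⟩ := cont_congr (n+1) c d fun i hi hin => h i hi (by omega)
    obtain ⟨h3, h4⟩ := cont_congr n c d fun i hi hin => h i hi (by omega)
    rw [contP_rec, contQ_rec, contP_rec, contQ_rec, h1, h2, h3, h4,
      h (n+2) (by omega) le_rfl]
    exact ⟨rfl, rfl⟩

lemma cont_det (c : ℕ → ℤ) : ∀ n : ℕ,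
    contP c n * contQ c (n+1) - contP c (n+1) * contQ c n = 1
  | 0 => by simp [contP_zero, contQ_zero, contP_one, contQ_one]
  | (n+1) => by
    have ih := cont_det c n
    rw [contP_rec, contQ_rec]
    linear_combination ih

lemma cont_pos (c : ℕ → ℤ) : ∀ n : ℕ, (∀ i, 1 ≤ i → i ≤ n + 1 → 2 ≤ c i) →
    1 ≤ contP c n ∧ contP c n < contP c (n+1)
  | 0, h => by
    have := h 1 le_rfl le_rfl
    show 1 ≤ contP c 0 ∧ contP c 0 < contP c 1
    simp only [contP_zero, contP_one]
    omega
  | (n+1), h => by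
    obtain ⟨ih1, ih2⟩ := cont_pos c n (fun i hi hin => h i hi (by omega))
    have h2 := h (n+2) (by omega) le_rfl
    have e : n + 1 + 1 = n + 2 := rfl
    rw [e, contP_rec]
    constructor
    · omega
    · nlinarith

lemma cont_split (c : ℕ → ℤ) (n : ℕ) (hn : 1 ≤ n) : ∀ k : ℕ,
    contP c (n + k) = contP c n * contP (fun i => c (n+i)) k
      - contP c (n-1) * contQ (fun i => c (n+i)) k ∧
    contQ c (n + k) = contQ c n * contP (fun i => c (n+i)) k
      - contQ c (n-1) * contQ (fun i => c (n+i)) k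
  | 0 => by simp [contP_zero, contQ_zero]
  | 1 => by
    obtain ⟨j, rfl⟩ : ∃ j, n = j + 1 := ⟨n - 1, by omega⟩
    have e : j + 1 + 1 = j + 2 := rfl
    rw [e, contP_rec, contQ_rec]
    constructor
    · show _ = _ * contP (fun i => c (j+1+i)) 1 - contP c (j+1-1) * contQ (fun i => c (j+1+i)) 1
      rw [contP_one, contQ_one]
      show _ = contP c (j+1) * c (j+1+1) - contP c (j+1-1) * 1
      have : j + 1 - 1 = j := rfl
      rw [this]
      ring
    · show _ = _ * contP (fun i => c (j+1+i)) 1 - contQ c (j+1-1) * contQ (fun i => c (j+1+i)) 1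
      rw [contP_one, contQ_one]
      show _ = contQ c (j+1) * c (j+1+1) - contQ c (j+1-1) * 1
      have : j + 1 - 1 = j := rfl
      rw [this]
      ring
  | (k+2) => by
    obtain ⟨ih1, ih2⟩ := cont_split c n hn (k+1)
    obtain ⟨ih3, ih4⟩ := cont_split c n hn k
    have e2 : n + (k + 2) = (n + k) + 2 := by omega
    have e1 : n + (k + 1) = (n + k) + 1 := by omega
    rw [e1] at ih1 ih2
    simp only [e2, contP_rec, contQ_rec, ih1, ih2, ih3, ih4]
    exact ⟨by ring, by ring⟩

lemma cont_rev : ∀ (k : ℕ) (b b' : ℕ → ℤ), (∀ i, 1 ≤ i → i ≤ k → b' i = b (k + 1 - i)) →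
    contP b' k = contP b k ∧ (1 ≤ k → contQ b' k = contP b (k - 1))
  | 0, b, b', _ => by simp [contP_zero]
  | (k+1), b, b', h => by
    obtain ⟨S1, S2⟩ := cont_split b' 1 le_rfl k
    have hs : ∀ i, 1 ≤ i → i ≤ k → (fun i => b' (1 + i)) i = b (k + 1 - i) := by
      intro i hi hik
      show b' (1+i) = _
      rw [h (1+i) (by omega) (by omega)]
      congr 1; omega
    obtain ⟨R1, R2⟩ := cont_rev k b (fun i => b' (1 + i)) hs
    have e : (1 : ℕ) + k = k + 1 := by omega
    rw [e] at S1 S2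
    have e0 : (1 : ℕ) - 1 = 0 := rfl
    rw [e0, contP_one, contP_zero] at S1
    rw [e0, contQ_one, contQ_zero] at S2
    have hb1 : b' 1 = b (k + 1) := by
      rw [h 1 le_rfl (by omega)]
      norm_num
    constructor
    · rw [S1, R1, hb1]
      rcases Nat.eq_zero_or_pos k with hk | hk
      · subst hk
        simp [contP_zero, contP_one, contQ_zero]
      · rw [R2 hk]
        obtain ⟨j, rfl⟩ : ∃ j, k = j + 1 := ⟨k - 1, by omega⟩
        have e1 : j + 1 + 1 = j + 2 := rfl
        have e2 : j + 1 - 1 = j := rfl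
        rw [e1, e2, contP_rec]
        ring
    · intro _
      rw [S2, R1]
      have : k + 1 - 1 = k := rfl
      rw [this]
      ring
/-- **Merged concatenation with the reversal.** Let `a_1,…,a_l ≥ 2` have
continuants `p_l, p_{l-1}, q_l, q_{l-1}` and `r_l = p_l - q_l`, and let
`b_1,…,b_m ≥ 2` satisfy `[b_1,…,b_m]⁻ = p_l / r_l`.  Then the sequence
`(a_1,…,a_{l-1}, a_l + b_m + 1, b_{m-1},…,b_1)` (of length `l + m - 1`) has
continuant numerator `p_l² + p_l p_{l-1} - p_{l-1}²` and denominator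
`q_l p_l + q_{l-1} p_l - q_{l-1} p_{l-1} - 1`. -/
theorem continuant_merged_concat (l m : ℕ) (hl : 1 ≤ l) (hm : 1 ≤ m)
    (a b : ℕ → ℤ)
    (ha : ∀ i, 1 ≤ i → i ≤ l → 2 ≤ a i) (hb : ∀ i, 1 ≤ i → i ≤ m → 2 ≤ b i)
    (hnum : contP b m = contP a l)
    (hden : contQ b m = contP a l - contQ a l)
    (c : ℕ → ℤ)
    (hc : c = fun i => if i < l then a i
                       else if i = l then a l + b m + 1
                       else b (l + m - i)) :
    contP c (l + m - 1) =
      contP a l ^ 2 + contP a l * contP a (l - 1) - contP a (l - 1) ^ 2 ∧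
    contQ c (l + m - 1) =
      contQ a l * contP a l + contQ a (l - 1) * contP a l -
        contQ a (l - 1) * contP a (l - 1) - 1 := by
  have hclt : ∀ i, i < l → c i = a i := by
    intro i h; simp only [hc]; rw [if_pos h]
  have hcl : c l = a l + b m + 1 := by simp [hc]
  have hcgt : ∀ i, 1 ≤ i → c (l + i) = b (m - i) := by
    intro i hi
    simp only [hc]
    rw [if_neg (by omega), if_neg (by omega)]
    congr 1; omega
  obtain ⟨hP1, hQ1⟩ := cont_congr (l-1) c a (fun i hi hij => hclt i (by omega))
  have hPl : contP c l = contP a l + (b m + 1) * contP a (l - 1) ∧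
      contQ c l = contQ a l + (b m + 1) * contQ a (l - 1) := by
    rcases Nat.lt_or_ge l 2 with h2 | h2
    · have : l = 1 := by omega
      subst this
      rw [show (1:ℕ) - 1 = 0 from rfl, contP_one, contP_one, contQ_one, contQ_one,
        contP_zero, contQ_zero, hcl]
      exact ⟨by ring, by ring⟩
    · obtain ⟨j, rfl⟩ : ∃ j, l = j + 2 := ⟨l - 2, by omega⟩
      obtain ⟨p1, q1⟩ := cont_congr (j+1) c a (fun i hi hij => hclt i (by omega))
      obtain ⟨p0, q0⟩ := cont_congr j c a (fun i hi hij => hclt i (by omega))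
      rw [show (j:ℕ) + 2 - 1 = j + 1 from rfl, contP_rec, contP_rec, contQ_rec,
        contQ_rec, p1, q1, p0, q0, hcl]
      exact ⟨by ring, by ring⟩
  have hdet_a : contP a (l-1) * contQ a l - contP a l * contQ a (l-1) = 1 := by
    have := cont_det a (l-1)
    rwa [show l - 1 + 1 = l from by omega] at this
  have hdet_b : contP b (m-1) * (contP a l - contQ a l) - contP a l * contQ b (m-1) = 1 := by
    have := cont_det b (m-1)
    rwa [show m - 1 + 1 = m from by omega, hnum, hden] at this
  obtain ⟨hpa1, hpa2⟩ : 1 ≤ contP a (l-1) ∧ contP a (l-1) < contP a l := by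
    have := cont_pos a (l-1) (fun i hi hil => ha i hi (by omega))
    rwa [show l - 1 + 1 = l from by omega] at this
  obtain ⟨hpb1, hpb2⟩ : 1 ≤ contP b (m-1) ∧ contP b (m-1) < contP a l := by
    have := cont_pos b (m-1) (fun i hi him => hb i hi (by omega))
    rwa [show m - 1 + 1 = m from by omega, hnum] at this
  have hkey : contP b (m-1) = contP a l - contP a (l-1) := by
    have hco : IsCoprime (contP a l) (contP a l - contQ a l) :=
      ⟨-contQ b (m-1), contP b (m-1), by linear_combination hdet_b⟩
    have hdvd : contP a l ∣
        (contP b (m-1) - (contP a l - contP a (l-1))) * (contP a l - contQ a l) :=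
      ⟨contQ b (m-1) - contP a l + contQ a l + contP a (l-1) - contQ a (l-1),
        by linear_combination hdet_b - hdet_a⟩
    have h0 : contP b (m-1) - (contP a l - contP a (l-1)) = 0 := by
      refine Int.eq_zero_of_abs_lt_dvd (hco.dvd_of_dvd_mul_right hdvd) ?_
      rw [abs_lt]
      omega
    linarith
  obtain ⟨S1, S2⟩ := cont_split c l hl (m-1)
  have hs : ∀ i, 1 ≤ i → i ≤ m - 1 → (fun i => c (l + i)) i = b (m - 1 + 1 - i) := by
    intro i hi him
    show c (l + i) = _
    rw [hcgt i hi]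
    congr 1; omega
  obtain ⟨R1, R2⟩ := cont_rev (m-1) b (fun i => c (l + i)) hs
  rw [show l + m - 1 = l + (m - 1) from by omega, S1, S2, R1, hP1, hQ1, hPl.1, hPl.2]
  rcases Nat.lt_or_ge m 2 with hm2 | hm2
  · have hm1 : m = 1 := by omega
    subst hm1
    rw [show (1:ℕ) - 1 = 0 from rfl] at hkey ⊢
    rw [contP_zero] at hkey
    have hb1 : b 1 = contP a l := by rw [← contP_one b]; exact hnum
    rw [contP_zero, contQ_zero, hb1]
    constructor
    · linear_combination (contP a l + contP a (l-1)) * hkey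
    · linear_combination (contQ a l + contQ a (l-1)) * hkey - hdet_a
  · have hm1 : 1 ≤ m - 1 := by omega
    rw [R2 hm1, show m - 1 - 1 = m - 2 from by omega]
    have hrec : contP b m = b m * contP b (m-1) - contP b (m-2) := by
      have := contP_rec b (m-2)
      rwa [show m-2+2 = m from by omega, show m-2+1 = m-1 from by omega] at this
    have hBpp : contP b (m-2) = b m * (contP a l - contP a (l-1)) - contP a l := by
      rw [← hkey]; linarith [hrec, hnum]
    rw [hkey, hBpp]
    exact ⟨by ring, by linear_combination -hdet_a⟩
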